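/- (Three-point estimate.) Let A and B be nonempty closed subsets of ℝⁿ, x* ∈ A ∩ B, ω ∈ [0,2), γ > 0, and c ∈ (0, γ/2). Suppose there is a neighborhood U of x* such that: (i) every building block b → a⁺ → b⁺ with b, a⁺, b⁺ ∈ U satisfies ⟨b − a⁺, b⁺ − a⁺⟩ ≤ (1 − γ‖b⁺ − a⁺‖^ω)‖b − a⁺‖‖b⁺ − a⁺‖; and (ii) for every a⁺ ∈ A ∩ U and every b⁺ ∈ P_B(a⁺) ∩ U, setting r = ‖a⁺ − b⁺‖, there is no b ∈ B with ‖b − a⁺‖ ≤ (1+c)r, a⁺ ∈ P_A(b), and ⟨a⁺ − b⁺, b − b⁺⟩ > √c·r^{ω/2+1}·‖b − b⁺‖. Then there exists ℓ ∈ (0,1), depending only on γ, c and U (one may take ℓ = min{1/2, 1 − √(2c/γ), c/(2+c)}), such that ‖a⁺ − b⁺‖² + ℓ‖b − b⁺‖² ≤ ‖a⁺ − b‖² for every building block b → a⁺ → b⁺ with b, a⁺, b⁺ ∈ U. -/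

import Mathlib

open Set Metric Filter Topology RealInnerProductSpace
open scoped ENNReal

variable {E : Type*} [NormedAddCommGroup E] [InnerProductSpace ℝ E]

/-- The (possibly set-valued) metric projection onto a set `S`. -/
noncomputable def projSet (S : Set E) (x : E) : Set E :=
  {s | s ∈ S ∧ ‖x - s‖ = Metric.infDist x S}

set_option maxHeartbeats 1000000 in
theorem stmt12 {n : ℕ} (A B : Set (EuclideanSpace ℝ (Fin n)))
    (hAne : A.Nonempty) (hBne : B.Nonempty) (hAc : IsClosed A) (hBc : IsClosed B)
    (xs : EuclideanSpace ℝ (Fin n)) (hxs : xs ∈ A ∩ B)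
    (ω γ c : ℝ) (hω : 0 ≤ ω) (hω2 : ω < 2) (hγ : 0 < γ) (hc : 0 < c) (hcγ : c < γ / 2)
    (U : Set (EuclideanSpace ℝ (Fin n))) (hU : U ∈ nhds xs)
    (hsep : ∀ b a' b' : EuclideanSpace ℝ (Fin n), b ∈ B → a' ∈ projSet A b →
      b' ∈ projSet B a' → b ∈ U → a' ∈ U → b' ∈ U →
      ⟪b - a', b' - a'⟫ ≤ (1 - γ * ‖b' - a'‖ ^ ω) * ‖b - a'‖ * ‖b' - a'‖)
    (hreg : ∀ a' ∈ A ∩ U, ∀ b' ∈ projSet B a' ∩ U, ∀ b ∈ B,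
      ‖b - a'‖ ≤ (1 + c) * ‖a' - b'‖ → a' ∈ projSet A b →
      ⟪a' - b', b - b'⟫ ≤ Real.sqrt c * ‖a' - b'‖ ^ (ω / 2 + 1) * ‖b - b'‖) :
    ∃ ℓ : ℝ, ℓ = min (1 / 2) (min (1 - Real.sqrt (2 * c / γ)) (c / (2 + c))) ∧
      0 < ℓ ∧ ℓ < 1 ∧
      ∀ b a' b' : EuclideanSpace ℝ (Fin n), b ∈ B → a' ∈ projSet A b →
        b' ∈ projSet B a' → b ∈ U → a' ∈ U → b' ∈ U →
        ‖a' - b'‖ ^ 2 + ℓ * ‖b - b'‖ ^ 2 ≤ ‖a' - b‖ ^ 2 := by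
  set l : ℝ := min (1 / 2) (min (1 - Real.sqrt (2 * c / γ)) (c / (2 + c))) with hl
  have hsqlt : Real.sqrt (2 * c / γ) < 1 := by
    have h1 : 2 * c / γ < 1 := by rw [div_lt_one hγ]; linarith
    calc Real.sqrt (2 * c / γ) < Real.sqrt 1 := Real.sqrt_lt_sqrt (by positivity) h1
      _ = 1 := Real.sqrt_one
  have hl1 : l ≤ 1 / 2 := min_le_left _ _
  have hl2 : l ≤ 1 - Real.sqrt (2 * c / γ) := le_trans (min_le_right _ _) (min_le_left _ _)
  have hl3 : l ≤ c / (2 + c) := le_trans (min_le_right _ _) (min_le_right _ _)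
  have hlpos : 0 < l :=
    lt_min (by norm_num) (lt_min (by linarith) (by positivity))
  refine ⟨l, hl, hlpos, by linarith, ?_⟩
  intro b a' b' hb ha' hb' hbU ha'U hb'U
  have hrd : ‖a' - b'‖ ≤ ‖a' - b‖ := by
    have h := Metric.infDist_le_dist_of_mem (x := a') hb
    rw [dist_eq_norm] at h
    rw [hb'.2]; exact h
  have hq0 : (0:ℝ) ≤ ‖b - b'‖ := norm_nonneg _
  have hr0 : (0:ℝ) ≤ ‖a' - b'‖ := norm_nonneg _
  have hd0 : (0:ℝ) ≤ ‖a' - b‖ := norm_nonneg _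
  have key1 : ‖a' - b‖ ^ 2 = ‖a' - b'‖ ^ 2 - 2 * ⟪a' - b', b - b'⟫ + ‖b - b'‖ ^ 2 := by
    rw [show a' - b = (a' - b') - (b - b') by abel, norm_sub_sq_real]
  by_cases hrz : ‖a' - b'‖ = 0
  · have hab : a' = b' := by rwa [norm_eq_zero, sub_eq_zero] at hrz
    have hqd : ‖b - b'‖ = ‖a' - b‖ := by rw [← hab, norm_sub_rev]
    rw [hrz, hqd]
    nlinarith [sq_nonneg ‖a' - b‖, mul_le_mul_of_nonneg_right hl1 (sq_nonneg ‖a' - b‖)]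
  have hrpos : 0 < ‖a' - b'‖ := lt_of_le_of_ne hr0 (Ne.symm hrz)
  by_cases hcase : ‖b - a'‖ ≤ (1 + c) * ‖a' - b'‖
  · -- Case 2: use hreg and hsep
    have hrpow : (0:ℝ) ≤ ‖a' - b'‖ ^ ω := Real.rpow_nonneg hr0 ω
    have key2 : ‖b - b'‖ ^ 2 = ‖b - a'‖ ^ 2 - 2 * ⟪b - a', b' - a'⟫ + ‖b' - a'‖ ^ 2 := by
      rw [show b - b' = (b - a') - (b' - a') by abel, norm_sub_sq_real]
    have e1 : ‖b - a'‖ = ‖a' - b‖ := norm_sub_rev _ _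
    have e2 : ‖b' - a'‖ = ‖a' - b'‖ := norm_sub_rev _ _
    have hi := hsep b a' b' hb ha' hb' hbU ha'U hb'U
    rw [e1, e2] at hi key2
    have hpow : ‖a' - b'‖ ^ (ω + 2) = ‖a' - b'‖ ^ ω * ‖a' - b'‖ ^ 2 := by
      rw [Real.rpow_add hrpos, show ((2:ℝ) = ((2:ℕ):ℝ)) by norm_num, Real.rpow_natCast]
    have hq2 : 2 * γ * ‖a' - b'‖ ^ (ω + 2) ≤ ‖b - b'‖ ^ 2 := by
      rw [hpow]
      nlinarith [sq_nonneg (‖a' - b‖ - ‖a' - b'‖),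
        mul_le_mul_of_nonneg_right hrd (mul_nonneg (mul_nonneg (by linarith : (0:ℝ) ≤ 2 * γ) hrpow) hr0)]
    set s : ℝ := ‖a' - b'‖ ^ (ω / 2 + 1) with hs
    have hs0 : 0 ≤ s := Real.rpow_nonneg hr0 _
    have hs2 : s ^ 2 = ‖a' - b'‖ ^ (ω + 2) := by
      rw [hs, ← Real.rpow_natCast (‖a' - b'‖ ^ (ω / 2 + 1)) 2, ← Real.rpow_mul hr0]
      norm_num; ring_nf
    have hqs : Real.sqrt (2 * γ) * s ≤ ‖b - b'‖ := by
      have h1 : Real.sqrt (2 * γ * s ^ 2) ≤ Real.sqrt (‖b - b'‖ ^ 2) := by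
        apply Real.sqrt_le_sqrt; rw [hs2]; exact hq2
      rwa [Real.sqrt_mul (by positivity), Real.sqrt_sq hs0, Real.sqrt_sq hq0] at h1
    have e3 : Real.sqrt (2 * c / γ) * Real.sqrt (2 * γ) = 2 * Real.sqrt c := by
      rw [← Real.sqrt_mul (by positivity)]
      rw [show 2 * c / γ * (2 * γ) = 2 ^ 2 * c by field_simp]
      rw [Real.sqrt_mul (by positivity), Real.sqrt_sq (by norm_num)]
    have h2c : 2 * Real.sqrt c * s ≤ Real.sqrt (2 * c / γ) * ‖b - b'‖ := by
      calc 2 * Real.sqrt c * s = Real.sqrt (2 * c / γ) * (Real.sqrt (2 * γ) * s) := by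
            rw [← mul_assoc, e3]
        _ ≤ Real.sqrt (2 * c / γ) * ‖b - b'‖ :=
            mul_le_mul_of_nonneg_left hqs (Real.sqrt_nonneg _)
    have hip := hreg a' ⟨ha'.1, ha'U⟩ b' ⟨hb', hb'U⟩ b hb hcase ha'
    have hfin : 2 * ⟪a' - b', b - b'⟫ ≤ (1 - l) * ‖b - b'‖ ^ 2 := by
      have h1 : 2 * ⟪a' - b', b - b'⟫ ≤ 2 * Real.sqrt c * s * ‖b - b'‖ := by
        have := hip; linarith
      have h2 : 2 * Real.sqrt c * s * ‖b - b'‖ ≤ Real.sqrt (2 * c / γ) * ‖b - b'‖ ^ 2 := by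
        calc 2 * Real.sqrt c * s * ‖b - b'‖
            ≤ Real.sqrt (2 * c / γ) * ‖b - b'‖ * ‖b - b'‖ :=
              mul_le_mul_of_nonneg_right h2c hq0
          _ = Real.sqrt (2 * c / γ) * ‖b - b'‖ ^ 2 := by ring
      have h3 : Real.sqrt (2 * c / γ) * ‖b - b'‖ ^ 2 ≤ (1 - l) * ‖b - b'‖ ^ 2 :=
        mul_le_mul_of_nonneg_right (by linarith) (sq_nonneg _)
      linarith
    linarith [hfin, key1]
  · -- Case 1: ‖b - a'‖ > (1+c) * r
    push_neg at hcase
    rw [norm_sub_rev b a'] at hcase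
    have hcase' : (1 + c) * ‖a' - b'‖ ≤ ‖a' - b‖ := hcase.le
    have htri : ‖b - b'‖ ≤ ‖a' - b‖ + ‖a' - b'‖ := by
      calc ‖b - b'‖ = ‖(b - a') + (a' - b')‖ := by
            rw [show b - b' = (b - a') + (a' - b') from by abel]
        _ ≤ ‖b - a'‖ + ‖a' - b'‖ := norm_add_le _ _
        _ = ‖a' - b‖ + ‖a' - b'‖ := by rw [norm_sub_rev]
    have ht0 : (0:ℝ) ≤ ‖a' - b‖ - (1 + c) * ‖a' - b'‖ := by linarith
    have hmain : (2 + c) * ‖a' - b'‖ ^ 2 + c * ‖b - b'‖ ^ 2 ≤ (2 + c) * ‖a' - b‖ ^ 2 := by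
      nlinarith [mul_le_mul htri htri hq0 (by positivity : (0:ℝ) ≤ ‖a' - b‖ + ‖a' - b'‖),
        mul_nonneg ht0 hr0, sq_nonneg (‖a' - b‖ - (1 + c) * ‖a' - b'‖),
        mul_nonneg (mul_nonneg hc.le hr0) ht0]
    have h4 : l * (2 + c) ≤ c :=
      (le_div_iff₀ (by linarith : (0:ℝ) < 2 + c)).mp hl3
    have h2c0 : (0:ℝ) < 2 + c := by linarith
    have h6 := mul_le_mul_of_nonneg_right h4 (sq_nonneg ‖b - b'‖)
    have h5 : (2 + c) * (‖a' - b'‖ ^ 2 + l * ‖b - b'‖ ^ 2) ≤ (2 + c) * ‖a' - b‖ ^ 2 := by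
      linarith only [hmain, h6]
    exact le_of_mul_le_mul_left h5 h2c0
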